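/- Let Q ∈ ℝ^{p×p}, R ∈ ℝ^{r×r} be positive definite, [A₀,B₀] stabilizable, and K₀ the unique positive semidefinite solution of the Riccati equation for (A₀,B₀,Q,R). Let {w(t)}_{t≥1} be independent random vectors in ℝ^p with mean zero and positive definite covariance matrix C, x(0) a deterministic initial state, and let x(t+1) = A₀x(t) + B₀u(t) + w(t+1), where for every t the control u(t) is an ℝ^r-valued random vector measurable with respect to σ(x(0),…,x(t)). Then for c_t = x(t)ᵀQx(t) + u(t)ᵀRu(t) it holds that limsup_{T→∞} (1/T) Σ_{t=1}^{T} E[c_t] ≥ tr(K₀ C). -/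

import Mathlib

open Matrix MeasureTheory ProbabilityTheory

section Algebra

lemma dot_trans {a b : ℕ} (M : Matrix (Fin a) (Fin b) ℝ) (x : Fin a → ℝ) (y : Fin b → ℝ) :
    x ⬝ᵥ (M *ᵥ y) = (Mᵀ *ᵥ x) ⬝ᵥ y := by
  rw [Matrix.dotProduct_mulVec, Matrix.mulVec_transpose]

lemma dot_trans' {a b : ℕ} (M : Matrix (Fin a) (Fin b) ℝ) (x : Fin b → ℝ) (y : Fin a → ℝ) :
    (M *ᵥ x) ⬝ᵥ y = x ⬝ᵥ (Mᵀ *ᵥ y) := by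
  rw [dotProduct_comm, dot_trans, dotProduct_comm]

lemma sym_eq {a : ℕ} {M : Matrix (Fin a) (Fin a) ℝ} (hM : M.IsHermitian) : Mᵀ = M := by
  have h := hM.eq; rwa [Matrix.conjTranspose_eq_transpose_of_trivial] at h

lemma sym_dot {a : ℕ} {M : Matrix (Fin a) (Fin a) ℝ} (hM : Mᵀ = M) (y z : Fin a → ℝ) :
    y ⬝ᵥ M *ᵥ z = z ⬝ᵥ M *ᵥ y := by
  rw [dot_trans, hM, dotProduct_comm]

lemma cross_dot {a b n : ℕ} {K : Matrix (Fin n) (Fin n) ℝ} (hKt : Kᵀ = K)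
    (M : Matrix (Fin n) (Fin a) ℝ) (N : Matrix (Fin n) (Fin b) ℝ)
    (y : Fin a → ℝ) (z : Fin b → ℝ) :
    y ⬝ᵥ Mᵀ *ᵥ (K *ᵥ (N *ᵥ z)) = z ⬝ᵥ Nᵀ *ᵥ (K *ᵥ (M *ᵥ y)) := by
  rw [dot_trans, Matrix.transpose_transpose, dot_trans, hKt, dotProduct_comm,
    dot_trans', dotProduct_comm]

set_option maxHeartbeats 1000000 in
lemma riccati_key {p r : ℕ} (Q : Matrix (Fin p) (Fin p) ℝ) (R : Matrix (Fin r) (Fin r) ℝ)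
    (hR : R.PosDef) (A : Matrix (Fin p) (Fin p) ℝ) (B : Matrix (Fin p) (Fin r) ℝ)
    (K : Matrix (Fin p) (Fin p) ℝ) (hK : K.PosSemidef)
    (hric : K = Q + Aᵀ * K * A - Aᵀ * K * B * (Bᵀ * K * B + R)⁻¹ * (Bᵀ * K * A))
    (x : Fin p → ℝ) (u : Fin r → ℝ) :
    x ⬝ᵥ K *ᵥ x ≤ x ⬝ᵥ Q *ᵥ x + u ⬝ᵥ R *ᵥ u
      + (A *ᵥ x + B *ᵥ u) ⬝ᵥ K *ᵥ (A *ᵥ x + B *ᵥ u) := by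
  have hKt : Kᵀ = K := sym_eq hK.1
  set S : Matrix (Fin r) (Fin r) ℝ := Bᵀ * K * B + R with hSdef
  have hBKB : (Bᵀ * K * B).PosSemidef := by
    have := hK.conjTranspose_mul_mul_same B
    simpa using this
  have hS : S.PosDef := Matrix.PosDef.posSemidef_add hBKB hR
  have hSt : Sᵀ = S := sym_eq hS.1
  have hdet : IsUnit S.det := isUnit_iff_ne_zero.mpr hS.det_pos.ne'
  have hSS : S * S⁻¹ = 1 := Matrix.mul_nonsing_inv S hdet
  have hSinvT : (S⁻¹)ᵀ = S⁻¹ := by rw [Matrix.transpose_nonsing_inv, hSt]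
  have hSSv : ∀ z : Fin r → ℝ, S *ᵥ (S⁻¹ *ᵥ z) = z := by
    intro z; rw [Matrix.mulVec_mulVec, hSS, Matrix.one_mulVec]
  have hQmat : Q = K - Aᵀ * K * A + Aᵀ * K * B * (Bᵀ * K * B + R)⁻¹ * (Bᵀ * K * A) := by
    have h : Q = Q + Aᵀ * K * A - Aᵀ * K * B * (Bᵀ * K * B + R)⁻¹ * (Bᵀ * K * A)
        - Aᵀ * K * A + Aᵀ * K * B * (Bᵀ * K * B + R)⁻¹ * (Bᵀ * K * A) := by abel
    rw [h, ← hric]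
  -- the chain vector q and completed-square vector m
  set q : Fin r → ℝ := Bᵀ *ᵥ (K *ᵥ (A *ᵥ x)) with hqdef
  set m : Fin r → ℝ := S⁻¹ *ᵥ q with hmdef
  -- scalar abbreviations
  have E1 : x ⬝ᵥ Q *ᵥ x
      = x ⬝ᵥ K *ᵥ x - x ⬝ᵥ Aᵀ *ᵥ (K *ᵥ (A *ᵥ x)) + x ⬝ᵥ Aᵀ *ᵥ (K *ᵥ (B *ᵥ m)) := by
    rw [hQmat]
    simp only [Matrix.sub_mulVec, Matrix.add_mulVec, dotProduct_sub,
      dotProduct_add, ← Matrix.mulVec_mulVec, hmdef, hqdef]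
    rfl
  have hcross : x ⬝ᵥ Aᵀ *ᵥ (K *ᵥ (B *ᵥ u)) = u ⬝ᵥ q := by
    rw [cross_dot hKt A B x u, hqdef]
  have E2 : (A *ᵥ x + B *ᵥ u) ⬝ᵥ K *ᵥ (A *ᵥ x + B *ᵥ u)
      = x ⬝ᵥ Aᵀ *ᵥ (K *ᵥ (A *ᵥ x)) + 2 * (u ⬝ᵥ q) + u ⬝ᵥ Bᵀ *ᵥ (K *ᵥ (B *ᵥ u)) := by
    have h1 : (A *ᵥ x) ⬝ᵥ K *ᵥ (A *ᵥ x) = x ⬝ᵥ Aᵀ *ᵥ (K *ᵥ (A *ᵥ x)) := by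
      rw [dot_trans' A]
    have h2 : (B *ᵥ u) ⬝ᵥ K *ᵥ (A *ᵥ x) = u ⬝ᵥ q := by
      rw [dot_trans' B, hqdef]
    have h3 : (A *ᵥ x) ⬝ᵥ K *ᵥ (B *ᵥ u) = u ⬝ᵥ q := by
      rw [dot_trans' A, hcross]
    have h4 : (B *ᵥ u) ⬝ᵥ K *ᵥ (B *ᵥ u) = u ⬝ᵥ Bᵀ *ᵥ (K *ᵥ (B *ᵥ u)) := by
      rw [dot_trans' B]
    rw [Matrix.mulVec_add, dotProduct_add, add_dotProduct, add_dotProduct,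
      h1, h2, h3, h4]
    ring
  have E3 : (u + m) ⬝ᵥ S *ᵥ (u + m)
      = u ⬝ᵥ R *ᵥ u + u ⬝ᵥ Bᵀ *ᵥ (K *ᵥ (B *ᵥ u)) + 2 * (u ⬝ᵥ q)
        + x ⬝ᵥ Aᵀ *ᵥ (K *ᵥ (B *ᵥ m)) := by
    have h1 : u ⬝ᵥ S *ᵥ u = u ⬝ᵥ Bᵀ *ᵥ (K *ᵥ (B *ᵥ u)) + u ⬝ᵥ R *ᵥ u := by
      rw [hSdef, Matrix.add_mulVec, dotProduct_add]
      simp only [← Matrix.mulVec_mulVec]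
    have h2 : u ⬝ᵥ S *ᵥ m = u ⬝ᵥ q := by rw [hmdef, hSSv]
    have h3 : m ⬝ᵥ S *ᵥ u = u ⬝ᵥ q := by rw [sym_dot hSt, h2]
    have h4 : m ⬝ᵥ S *ᵥ m = x ⬝ᵥ Aᵀ *ᵥ (K *ᵥ (B *ᵥ m)) := by
      rw [cross_dot hKt A B x m, ← hqdef, hmdef, hSSv, dotProduct_comm]
    rw [Matrix.mulVec_add, dotProduct_add, add_dotProduct, add_dotProduct,
      h1, h2, h3, h4]
    ring
  have hv : 0 ≤ (u + m) ⬝ᵥ S *ᵥ (u + m) := by simpa using hS.posSemidef.dotProduct_mulVec_nonneg (u + m)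
  linarith [E1, E2, E3, hv]

end Algebra

section Helpers

variable {Ω : Type*} [MeasurableSpace Ω] {μ : Measure Ω}

/-- Cauchy–Schwarz-type coordinate bound for positive definite quadratic forms. -/
lemma posdef_coord {n : ℕ} {M : Matrix (Fin n) (Fin n) ℝ} (hM : M.PosDef) (i : Fin n) :
    ∃ κ : ℝ, 0 < κ ∧ ∀ v : Fin n → ℝ, v i * v i ≤ κ * (v ⬝ᵥ M *ᵥ v) := by
  have hMt : Mᵀ = M := by
    have h := hM.1.eq; rwa [Matrix.conjTranspose_eq_transpose_of_trivial] at h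
  have hdet : IsUnit M.det := isUnit_iff_ne_zero.mpr hM.det_pos.ne'
  set e : Fin n → ℝ := Pi.single i 1 with hedef
  set y : Fin n → ℝ := M⁻¹ *ᵥ e with hydef
  have hMy : M *ᵥ y = e := by
    rw [hydef, Matrix.mulVec_mulVec, Matrix.mul_nonsing_inv _ hdet, Matrix.one_mulVec]
  have hy0 : y ≠ 0 := by
    intro h
    have : e = 0 := by rw [← hMy, h, Matrix.mulVec_zero]
    have := congrFun this i
    simp [hedef] at this
  have hκ : 0 < y ⬝ᵥ M *ᵥ y := by simpa using hM.dotProduct_mulVec_pos hy0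
  refine ⟨y ⬝ᵥ M *ᵥ y, hκ, fun v => ?_⟩
  have hvy : v ⬝ᵥ M *ᵥ y = v i := by
    rw [hMy, hedef]; simp [dotProduct, Pi.single_apply]
  have hsym : ∀ a b : Fin n → ℝ, a ⬝ᵥ M *ᵥ b = b ⬝ᵥ M *ᵥ a := by
    intro a b
    rw [Matrix.dotProduct_mulVec, ← Matrix.mulVec_transpose, hMt, dotProduct_comm]
  have hquad : ∀ s : ℝ, 0 ≤ (y ⬝ᵥ M *ᵥ y) * (s * s) + (2 * (v ⬝ᵥ M *ᵥ y)) * s + v ⬝ᵥ M *ᵥ v := by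
    intro s
    have h0 : 0 ≤ (v + s • y) ⬝ᵥ M *ᵥ (v + s • y) := by
      simpa using hM.posSemidef.dotProduct_mulVec_nonneg (v + s • y)
    have hexp : (v + s • y) ⬝ᵥ M *ᵥ (v + s • y)
        = (y ⬝ᵥ M *ᵥ y) * (s * s) + (2 * (v ⬝ᵥ M *ᵥ y)) * s + v ⬝ᵥ M *ᵥ v := by
      rw [Matrix.mulVec_add, dotProduct_add, add_dotProduct,
        add_dotProduct, Matrix.mulVec_smul, dotProduct_smul,
        smul_dotProduct, smul_dotProduct, dotProduct_smul,
        hsym y v]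
      simp [smul_eq_mul]
      ring
    rw [← hexp]; exact h0
  have hd := discrim_le_zero hquad
  rw [discrim] at hd
  simp only [sq] at hd
  rw [hvy] at hd
  linarith

/-- Upper bound on a quadratic form by the sum of squares. -/
lemma quad_upper {n : ℕ} (N : Matrix (Fin n) (Fin n) ℝ) (v : Fin n → ℝ) :
    v ⬝ᵥ N *ᵥ v ≤ (∑ i, ∑ j, |N i j|) * ∑ i, v i * v i := by
  have hexp : v ⬝ᵥ N *ᵥ v = ∑ i, ∑ j, N i j * (v i * v j) := by
    simp only [dotProduct, Matrix.mulVec, Finset.mul_sum]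
    refine Finset.sum_congr rfl fun i _ => Finset.sum_congr rfl fun j _ => by ring
  rw [hexp, Finset.sum_mul]
  refine Finset.sum_le_sum fun i _ => ?_
  rw [Finset.sum_mul]
  refine Finset.sum_le_sum fun j _ => ?_
  have hsum : 0 ≤ ∑ k, v k * v k := Finset.sum_nonneg fun k _ => mul_self_nonneg _
  have hi : v i * v i ≤ ∑ k, v k * v k :=
    Finset.single_le_sum (fun k _ => mul_self_nonneg (v k)) (Finset.mem_univ i)
  have hj : v j * v j ≤ ∑ k, v k * v k :=
    Finset.single_le_sum (fun k _ => mul_self_nonneg (v k)) (Finset.mem_univ j)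
  have habs : |v i * v j| ≤ ∑ k, v k * v k := by
    rw [abs_mul]
    nlinarith [sq_nonneg (|v i| - |v j|), sq_abs (v i), sq_abs (v j),
      abs_nonneg (v i), abs_nonneg (v j)]
  calc N i j * (v i * v j) ≤ |N i j * (v i * v j)| := le_abs_self _
    _ = |N i j| * |v i * v j| := abs_mul _ _
    _ ≤ |N i j| * ∑ k, v k * v k := by
        exact mul_le_mul_of_nonneg_left habs (abs_nonneg _)

/-- Domination of a psd quadratic form by a posdef one. -/
lemma posdef_dominates {n : ℕ} {Q K : Matrix (Fin n) (Fin n) ℝ} (hQ : Q.PosDef)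
    (hK : K.PosSemidef) :
    ∃ α : ℝ, 0 < α ∧ ∀ v : Fin n → ℝ, α * (v ⬝ᵥ K *ᵥ v) ≤ v ⬝ᵥ Q *ᵥ v := by
  choose κ hκpos hκ using fun i => posdef_coord hQ i
  set cK := ∑ i, ∑ j, |K i j| with hcK
  have hcK0 : 0 ≤ cK := Finset.sum_nonneg fun i _ => Finset.sum_nonneg fun j _ => abs_nonneg _
  set κS := ∑ i, κ i with hκS
  have hκS0 : 0 ≤ κS := Finset.sum_nonneg fun i _ => (hκpos i).le
  refine ⟨(cK * κS + 1)⁻¹, by positivity, fun v => ?_⟩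
  have hQv : 0 ≤ v ⬝ᵥ Q *ᵥ v := by simpa using hQ.posSemidef.dotProduct_mulVec_nonneg v
  have h1 : ∑ i, v i * v i ≤ κS * (v ⬝ᵥ Q *ᵥ v) := by
    rw [hκS, Finset.sum_mul]
    exact Finset.sum_le_sum fun i _ => hκ i v
  have h2 : v ⬝ᵥ K *ᵥ v ≤ cK * (κS * (v ⬝ᵥ Q *ᵥ v)) := by
    calc v ⬝ᵥ K *ᵥ v ≤ cK * ∑ i, v i * v i := quad_upper K v
      _ ≤ cK * (κS * (v ⬝ᵥ Q *ᵥ v)) := mul_le_mul_of_nonneg_left h1 hcK0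
  rw [inv_mul_le_iff₀ (by positivity)]
  nlinarith [h2, hQv]

/-- Product of two square-integrable measurable functions is integrable. -/
lemma int_mul {f g : Ω → ℝ} (hf : Measurable f) (hg : Measurable g)
    (hf2 : Integrable (fun ω => f ω * f ω) μ) (hg2 : Integrable (fun ω => g ω * g ω) μ) :
    Integrable (fun ω => f ω * g ω) μ := by
  have h : Integrable (fun ω => (f ω * f ω + g ω * g ω) / 2) μ := by
    simpa using (hf2.add hg2).div_const 2
  refine h.mono' ((hf.mul hg).aestronglyMeasurable) (Filter.Eventually.of_forall fun ω => ?_)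
  rw [Real.norm_eq_abs, abs_mul]
  nlinarith [sq_nonneg (|f ω| - |g ω|), sq_abs (f ω), sq_abs (g ω),
    abs_nonneg (f ω), abs_nonneg (g ω)]

lemma int_of_sq [IsProbabilityMeasure μ] {f : Ω → ℝ} (hf : Measurable f)
    (hf2 : Integrable (fun ω => f ω * f ω) μ) : Integrable f μ := by
  have h : Integrable (fun ω => (f ω * f ω + 1) / 2) μ := by
    simpa using (hf2.add (integrable_const 1)).div_const 2
  refine h.mono' hf.aestronglyMeasurable (Filter.Eventually.of_forall fun ω => ?_)
  rw [Real.norm_eq_abs]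
  nlinarith [sq_nonneg (|f ω| - 1), sq_abs (f ω), abs_nonneg (f ω)]

/-- Square-integrability of linear combinations. -/
lemma sq_lin {ι : Type*} (s : Finset ι) (a : ι → ℝ) (f : ι → Ω → ℝ)
    (hm : ∀ i ∈ s, Measurable (f i))
    (h2 : ∀ i ∈ s, Integrable (fun ω => f i ω * f i ω) μ) :
    Measurable (fun ω => ∑ i ∈ s, a i * f i ω) ∧
      Integrable (fun ω => (∑ i ∈ s, a i * f i ω) * (∑ j ∈ s, a j * f j ω)) μ := by
  constructor
  · exact Finset.measurable_sum _ fun i hi => (measurable_const.mul (hm i hi))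
  · have hrw : (fun ω => (∑ i ∈ s, a i * f i ω) * (∑ j ∈ s, a j * f j ω))
        = fun ω => ∑ i ∈ s, ∑ j ∈ s, (a i * f i ω) * (a j * f j ω) := by
      funext ω; rw [Finset.sum_mul_sum]
    rw [hrw]
    refine integrable_finset_sum _ fun i hi => integrable_finset_sum _ fun j hj => ?_
    have := int_mul (measurable_const.mul (hm i hi)) (measurable_const.mul (hm j hj))
      (by simpa [mul_mul_mul_comm] using ((h2 i hi).const_mul (a i * a i)))
      (by simpa [mul_mul_mul_comm] using ((h2 j hj).const_mul (a j * a j)))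
    exact this

/-- Expansion of a bilinear form as a double sum. -/
lemma dot_expand {n k : ℕ} (N : Matrix (Fin n) (Fin k) ℝ) (f : Fin n → ℝ) (g : Fin k → ℝ) :
    f ⬝ᵥ N *ᵥ g = ∑ i, ∑ j, N i j * (f i * g j) := by
  simp only [dotProduct, Matrix.mulVec, Finset.mul_sum]
  refine Finset.sum_congr rfl fun i _ => Finset.sum_congr rfl fun j _ => by ring

/-- Integrability of bilinear forms of square-integrable vectors. -/
lemma bilin_int {n k : ℕ} (N : Matrix (Fin n) (Fin k) ℝ) {f : Ω → Fin n → ℝ}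
    {g : Ω → Fin k → ℝ}
    (hfm : ∀ i, Measurable (fun ω => f ω i)) (hgm : ∀ j, Measurable (fun ω => g ω j))
    (hf2 : ∀ i, Integrable (fun ω => f ω i * f ω i) μ)
    (hg2 : ∀ j, Integrable (fun ω => g ω j * g ω j) μ) :
    Integrable (fun ω => f ω ⬝ᵥ N *ᵥ g ω) μ := by
  have hrw : (fun ω => f ω ⬝ᵥ N *ᵥ g ω)
      = fun ω => ∑ i, ∑ j, N i j * (f ω i * g ω j) := by
    funext ω; rw [dot_expand]
  rw [hrw]
  exact integrable_finset_sum _ fun i _ => integrable_finset_sum _ fun j _ =>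
    ((int_mul (hfm i) (hgm j) (hf2 i) (hg2 j)).const_mul _)

/-- Integral of a bilinear form. -/
lemma bilin_integral {n k : ℕ} (N : Matrix (Fin n) (Fin k) ℝ) {f : Ω → Fin n → ℝ}
    {g : Ω → Fin k → ℝ}
    (hfm : ∀ i, Measurable (fun ω => f ω i)) (hgm : ∀ j, Measurable (fun ω => g ω j))
    (hf2 : ∀ i, Integrable (fun ω => f ω i * f ω i) μ)
    (hg2 : ∀ j, Integrable (fun ω => g ω j * g ω j) μ) :
    ∫ ω, f ω ⬝ᵥ N *ᵥ g ω ∂μ = ∑ i, ∑ j, N i j * ∫ ω, f ω i * g ω j ∂μ := by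
  have hrw : (fun ω => f ω ⬝ᵥ N *ᵥ g ω)
      = fun ω => ∑ i, ∑ j, N i j * (f ω i * g ω j) := by
    funext ω; rw [dot_expand]
  rw [hrw, integral_finset_sum _ fun i _ => integrable_finset_sum _ fun j _ =>
    ((int_mul (hfm i) (hgm j) (hf2 i) (hg2 j)).const_mul (N i j))]
  refine Finset.sum_congr rfl fun i _ => ?_
  rw [integral_finset_sum _ fun j _ => ((int_mul (hfm i) (hgm j) (hf2 i) (hg2 j)).const_mul (N i j))]
  exact Finset.sum_congr rfl fun j _ => integral_const_mul _ _

/-- Measurability of matrix-vector product under a sub-σ-algebra. -/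
lemma mulVec_meas {m : MeasurableSpace Ω} {n k : ℕ} {v : Ω → Fin n → ℝ}
    (hv : Measurable[m] v) (M : Matrix (Fin k) (Fin n) ℝ) :
    Measurable[m] (fun ω => M *ᵥ v ω) := by
  apply measurable_pi_lambda
  intro i
  simp only [Matrix.mulVec, dotProduct]
  exact Finset.measurable_sum _ fun j _ =>
    (measurable_const.mul ((measurable_pi_apply j).comp hv))

lemma quadf_meas {m : MeasurableSpace Ω} {n k : ℕ} {v : Ω → Fin n → ℝ} {z : Ω → Fin k → ℝ}
    (hv : Measurable[m] v) (hz : Measurable[m] z) (M : Matrix (Fin n) (Fin k) ℝ) :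
    Measurable[m] (fun ω => v ω ⬝ᵥ M *ᵥ z ω) := by
  have hrw : (fun ω => v ω ⬝ᵥ M *ᵥ z ω)
      = fun ω => ∑ i, ∑ j, M i j * (v ω i * z ω j) := by
    funext ω; rw [dot_expand]
  rw [hrw]
  exact Finset.measurable_sum _ fun i _ => Finset.measurable_sum _ fun j _ =>
    measurable_const.mul (((measurable_pi_apply i).comp hv).mul
      ((measurable_pi_apply j).comp hz))

end Helpers

lemma indep_of_hist {Ω : Type*} [MeasurableSpace Ω] {μ : Measure Ω} {p : ℕ}
    {w : ℕ → Ω → Fin p → ℝ} (hwmeas : ∀ t : ℕ, Measurable (w (t + 1)))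
    (hindep : iIndepFun (fun t : ℕ => w (t + 1)) μ)
    (t : ℕ) {X Y : Ω → ℝ}
    (hX : Measurable[MeasurableSpace.comap
        (fun ω => fun i : Fin t => w ((i : ℕ) + 1) ω) MeasurableSpace.pi] X)
    (hY : Measurable[MeasurableSpace.comap (w (t + 1)) MeasurableSpace.pi] Y) :
    IndepFun X Y μ := by
  have h1 := hindep.indepFun_finset (Finset.range t) {t}
    (by simp [Finset.disjoint_left]; omega) hwmeas
  rw [IndepFun_iff_Indep] at h1
  rw [IndepFun_iff_Indep]
  have hle1 : MeasurableSpace.comap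
      (fun ω => fun i : Fin t => w ((i : ℕ) + 1) ω) MeasurableSpace.pi
      ≤ MeasurableSpace.comap
        (fun a (i : ↥(Finset.range t)) => w ((i : ℕ) + 1) a) MeasurableSpace.pi := by
    have hcomp : (fun ω => fun i : Fin t => w ((i : ℕ) + 1) ω)
        = (fun (v : ↥(Finset.range t) → Fin p → ℝ) (i : Fin t) =>
            v ⟨(i : ℕ), Finset.mem_range.mpr i.isLt⟩)
          ∘ (fun a (i : ↥(Finset.range t)) => w ((i : ℕ) + 1) a) := rfl
    rw [hcomp, ← MeasurableSpace.comap_comp]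
    exact MeasurableSpace.comap_mono
      (Measurable.comap_le (measurable_pi_lambda _ fun i => measurable_pi_apply _))
  have hle2 : MeasurableSpace.comap (w (t + 1)) MeasurableSpace.pi
      ≤ MeasurableSpace.comap
        (fun a (i : ↥({t} : Finset ℕ)) => w ((i : ℕ) + 1) a) MeasurableSpace.pi := by
    have hcomp : w (t + 1)
        = (fun (v : ↥({t} : Finset ℕ) → Fin p → ℝ) =>
            v ⟨t, Finset.mem_singleton_self t⟩)
          ∘ (fun a (i : ↥({t} : Finset ℕ)) => w ((i : ℕ) + 1) a) := rfl
    rw [hcomp, ← MeasurableSpace.comap_comp]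
    exact MeasurableSpace.comap_mono (Measurable.comap_le (measurable_pi_apply _))
  exact indep_of_indep_of_le_right
    (indep_of_indep_of_le_left h1 (le_trans hX.comap_le hle1))
    (le_trans hY.comap_le hle2)

/-- History σ-algebra generated by `w 1, …, w t`. -/
def hist {Ω : Type*} {p : ℕ} (w : ℕ → Ω → Fin p → ℝ) (t : ℕ) : MeasurableSpace Ω :=
  MeasurableSpace.comap (fun ω => fun i : Fin t => w ((i : ℕ) + 1) ω) MeasurableSpace.pi

lemma hist_le {Ω : Type*} [m : MeasurableSpace Ω] {p : ℕ} {w : ℕ → Ω → Fin p → ℝ}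
    (hwmeas : ∀ t : ℕ, Measurable (w (t + 1))) (t : ℕ) : hist w t ≤ m :=
  Measurable.comap_le (measurable_pi_lambda _ fun i => hwmeas i)

lemma hist_mono {Ω : Type*} {p : ℕ} {w : ℕ → Ω → Fin p → ℝ} {s t : ℕ} (hst : s ≤ t) :
    hist w s ≤ hist w t := by
  have hcomp : (fun ω => fun i : Fin s => w ((i : ℕ) + 1) ω)
      = (fun (v : Fin t → Fin p → ℝ) (i : Fin s) => v (Fin.castLE hst i))
        ∘ (fun (ω : Ω) (i : Fin t) => w ((i : ℕ) + 1) ω) := rfl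
  show MeasurableSpace.comap _ _ ≤ MeasurableSpace.comap _ _
  rw [hcomp, ← MeasurableSpace.comap_comp]
  exact MeasurableSpace.comap_mono
    (Measurable.comap_le (measurable_pi_lambda _ fun i => measurable_pi_apply _))

lemma w_meas_hist {Ω : Type*} {p : ℕ} {w : ℕ → Ω → Fin p → ℝ} (t : ℕ) :
    Measurable[hist w (t + 1)] (w (t + 1)) := by
  have hcomp : w (t + 1)
      = (fun (v : Fin (t + 1) → Fin p → ℝ) => v (Fin.last t))
        ∘ (fun (ω : Ω) (i : Fin (t + 1)) => w ((i : ℕ) + 1) ω) := rfl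
  rw [hcomp]
  exact (measurable_pi_apply _).comp (Measurable.of_comap_le le_rfl)

/-- A real square matrix has spectral radius less than one. -/
def SpecRadiusLtOne {p : ℕ} (D : Matrix (Fin p) (Fin p) ℝ) : Prop :=
  ∀ lam : ℂ, ((D.map (algebraMap ℝ ℂ)).charpoly).IsRoot lam → ‖lam‖ < 1

/-- The pair `[A, B]` is stabilizable. -/
def Stabilizable {p r : ℕ} (A : Matrix (Fin p) (Fin p) ℝ) (B : Matrix (Fin p) (Fin r) ℝ) : Prop :=
  ∃ L : Matrix (Fin r) (Fin p) ℝ, SpecRadiusLtOne (A + B * L)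


open Filter in
set_option maxHeartbeats 2000000 in
theorem average_cost_lower_bound {p r : ℕ}
    (Q : Matrix (Fin p) (Fin p) ℝ) (R : Matrix (Fin r) (Fin r) ℝ)
    (hQ : Q.PosDef) (hR : R.PosDef)
    (A₀ : Matrix (Fin p) (Fin p) ℝ) (B₀ : Matrix (Fin p) (Fin r) ℝ)
    (hstab : Stabilizable A₀ B₀)
    (K₀ : Matrix (Fin p) (Fin p) ℝ) (hK₀ : K₀.PosSemidef)
    (hric : K₀ = Q + A₀ᵀ * K₀ * A₀
      - A₀ᵀ * K₀ * B₀ * (B₀ᵀ * K₀ * B₀ + R)⁻¹ * (B₀ᵀ * K₀ * A₀))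
    {Ω : Type*} [MeasurableSpace Ω] (μ : Measure Ω) [IsProbabilityMeasure μ]
    (w : ℕ → Ω → (Fin p → ℝ)) (C : Matrix (Fin p) (Fin p) ℝ) (hC : C.PosDef)
    (hwmeas : ∀ t : ℕ, Measurable (w (t + 1)))
    (hindep : iIndepFun (fun t : ℕ => w (t + 1)) μ)
    (hint : ∀ (t : ℕ) (i : Fin p), Integrable (fun ω => w (t + 1) ω i) μ)
    (hmean : ∀ (t : ℕ) (i : Fin p), ∫ ω, w (t + 1) ω i ∂μ = 0)
    (hcovint : ∀ (t : ℕ) (i j : Fin p),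
      Integrable (fun ω => w (t + 1) ω i * w (t + 1) ω j) μ)
    (hcov : ∀ (t : ℕ) (i j : Fin p), ∫ ω, w (t + 1) ω i * w (t + 1) ω j ∂μ = C i j)
    (x0 : Fin p → ℝ)
    (x : ℕ → Ω → (Fin p → ℝ)) (u : ℕ → Ω → (Fin r → ℝ))
    (hx0 : x 0 = fun _ => x0)
    (hadapted : ∀ t : ℕ,
      Measurable[MeasurableSpace.comap
          (fun ω => fun i : Fin (t + 1) => x (i : ℕ) ω) MeasurableSpace.pi]
        (u t))
    (hx : ∀ t : ℕ, x (t + 1) = fun ω => A₀.mulVec (x t ω) + B₀.mulVec (u t ω) + w (t + 1) ω)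
    (c : ℕ → Ω → ℝ)
    (hc : ∀ (t : ℕ) (ω : Ω), c t ω = x t ω ⬝ᵥ Q.mulVec (x t ω) + u t ω ⬝ᵥ R.mulVec (u t ω)) :
    ENNReal.ofReal ((K₀ * C).trace) ≤
      Filter.atTop.limsup (fun T : ℕ =>
        (T : ENNReal)⁻¹ * ∑ t ∈ Finset.Icc 1 T, ∫⁻ ω, ENNReal.ofReal (c t ω) ∂μ) := by
  classical
  -- measurability of the processes w.r.t. history σ-algebras
  have hKt : K₀ᵀ = K₀ := sym_eq hK₀.1
  have hxmeasG : ∀ t : ℕ, ∀ s ≤ t, Measurable[hist w t] (x s) := by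
    intro t
    induction t with
    | zero =>
      intro s hs
      obtain rfl : s = 0 := Nat.le_zero.mp hs
      rw [hx0]; exact measurable_const
    | succ t ih =>
      intro s hs
      rcases Nat.lt_succ_iff_lt_or_eq.mp (Nat.lt_succ_of_le hs) with h | rfl
      · exact (ih s (Nat.lt_succ_iff.mp h)).mono (hist_mono (Nat.le_succ t)) le_rfl
      · rw [hx t]
        have hxt : Measurable[hist w (t + 1)] (x t) :=
          (ih t le_rfl).mono (hist_mono (Nat.le_succ t)) le_rfl
        have hut : Measurable[hist w (t + 1)] (u t) := by
          have hmap : Measurable[hist w t] (fun ω => fun i : Fin (t + 1) => x (i : ℕ) ω) := by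
            exact @measurable_pi_lambda Ω (Fin (t + 1)) (fun _ => Fin p → ℝ) (hist w t) _ _
              (fun i => ih (i : ℕ) (Nat.lt_succ_iff.mp i.isLt))
          exact ((hadapted t).mono hmap.comap_le le_rfl).mono
            (hist_mono (Nat.le_succ t)) le_rfl
        exact ((mulVec_meas hxt A₀).add (mulVec_meas hut B₀)).add (w_meas_hist t)
  have humeasG : ∀ t : ℕ, Measurable[hist w t] (u t) := by
    intro t
    have hmap : Measurable[hist w t] (fun ω => fun i : Fin (t + 1) => x (i : ℕ) ω) := by
      exact @measurable_pi_lambda Ω (Fin (t + 1)) (fun _ => Fin p → ℝ) (hist w t) _ _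
        (fun i => hxmeasG t (i : ℕ) (Nat.lt_succ_iff.mp i.isLt))
    exact (hadapted t).mono hmap.comap_le le_rfl
  have hxm : ∀ t, Measurable (x t) := fun t =>
    (hxmeasG t t le_rfl).mono (hist_le hwmeas t) le_rfl
  have hum : ∀ t, Measurable (u t) := fun t =>
    (humeasG t).mono (hist_le hwmeas t) le_rfl
  have hxmi : ∀ t i, Measurable (fun ω => x t ω i) := fun t i =>
    (measurable_pi_apply i).comp (hxm t)
  have humi : ∀ t j, Measurable (fun ω => u t ω j) := fun t j =>
    (measurable_pi_apply j).comp (hum t)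
  have hwmi : ∀ t i, Measurable (fun ω => w (t + 1) ω i) := fun t i =>
    (measurable_pi_apply i).comp (hwmeas t)
  have hcfun : ∀ t, c t = fun ω => x t ω ⬝ᵥ Q *ᵥ x t ω + u t ω ⬝ᵥ R *ᵥ u t ω :=
    fun t => funext (hc t)
  have hcm : ∀ t, Measurable (c t) := by
    intro t
    rw [hcfun t]
    exact (quadf_meas (hxm t) (hxm t) Q).add (quadf_meas (hum t) (hum t) R)
  have hc0 : ∀ t ω, 0 ≤ c t ω := by
    intro t ω
    rw [hc t ω]
    have h1 := hQ.posSemidef.dotProduct_mulVec_nonneg (x t ω)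
    have h2 := hR.posSemidef.dotProduct_mulVec_nonneg (u t ω)
    simp only [star_trivial] at h1 h2
    exact add_nonneg h1 h2
  -- the constant τ
  set τ : ℝ := ∑ i, ∑ j, K₀ i j * C i j with hτdef
  have hCsym : ∀ i j, C j i = C i j := by
    intro i j
    rw [← hcov 0 j i, ← hcov 0 i j]
    simp_rw [mul_comm]
  have htrace : (K₀ * C).trace = τ := by
    rw [hτdef, Matrix.trace]
    refine Finset.sum_congr rfl fun i _ => ?_
    rw [Matrix.diag_apply, Matrix.mul_apply]
    exact Finset.sum_congr rfl fun j _ => by rw [hCsym i j]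
  rw [htrace]
  -- main argument by contradiction
  by_contra hcon
  push_neg at hcon
  obtain ⟨b, hb1, hb2⟩ := exists_between hcon
  have hev := Filter.eventually_lt_of_limsup_lt hb1
  rw [Filter.eventually_atTop] at hev
  obtain ⟨T₀', hT₀⟩ := hev
  set T₁ : ℕ := max T₀' 1 with hT₁def
  have hT₁1 : 1 ≤ T₁ := le_max_right _ _
  have hbne : b ≠ ⊤ := (hb2.trans_le le_top).ne
  set β : ℝ := b.toReal with hβdef
  have hβ0 : 0 ≤ β := ENNReal.toReal_nonneg
  have hbβ : b = ENNReal.ofReal β := (ENNReal.ofReal_toReal hbne).symm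
  have hτpos : 0 < τ := ENNReal.ofReal_pos.mp (lt_of_le_of_lt (zero_le) hb2)
  have hβτ : β < τ := by
    rw [hbβ] at hb2
    exact (ENNReal.ofReal_lt_ofReal_iff hτpos).mp hb2
  -- all expected costs are finite
  have hfin : ∀ t : ℕ, 1 ≤ t → ∫⁻ ω, ENNReal.ofReal (c t ω) ∂μ ≠ ⊤ := by
    intro t ht htop
    set T : ℕ := max T₀' t with hTdef
    have hFT := hT₀ T (le_max_left _ _)
    have hsumtop : ∑ s ∈ Finset.Icc 1 T, ∫⁻ ω, ENNReal.ofReal (c s ω) ∂μ = ⊤ := by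
      rw [ENNReal.sum_eq_top]
      exact ⟨t, Finset.mem_Icc.mpr ⟨ht, le_max_right _ _⟩, htop⟩
    rw [hsumtop, ENNReal.mul_top (by
      simp only [ne_eq, ENNReal.inv_eq_zero]
      exact ENNReal.natCast_ne_top T)] at hFT
    exact (not_top_lt) hFT
  have hci : ∀ t, 1 ≤ t → Integrable (c t) μ := by
    intro t ht
    refine ⟨(hcm t).aestronglyMeasurable, ?_⟩
    rw [hasFiniteIntegral_iff_ofReal (Filter.Eventually.of_forall (hc0 t))]
    exact lt_top_iff_ne_top.mpr (hfin t ht)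
  -- square integrability of states and controls
  have hxsq : ∀ t, 1 ≤ t → ∀ i, Integrable (fun ω => x t ω i * x t ω i) μ := by
    intro t ht i
    obtain ⟨κ, hκ0, hκ⟩ := posdef_coord hQ i
    refine ((hci t ht).const_mul κ).mono'
      ((hxmi t i).mul (hxmi t i)).aestronglyMeasurable
      (Filter.Eventually.of_forall fun ω => ?_)
    rw [Real.norm_eq_abs, abs_of_nonneg (mul_self_nonneg _)]
    have h2 : 0 ≤ u t ω ⬝ᵥ R *ᵥ u t ω := by simpa using hR.posSemidef.dotProduct_mulVec_nonneg (u t ω)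
    calc x t ω i * x t ω i ≤ κ * (x t ω ⬝ᵥ Q *ᵥ x t ω) := hκ _
      _ ≤ κ * c t ω := by
          rw [hc t ω]
          exact mul_le_mul_of_nonneg_left (le_add_of_nonneg_right h2) hκ0.le
  have husq : ∀ t, 1 ≤ t → ∀ j, Integrable (fun ω => u t ω j * u t ω j) μ := by
    intro t ht j
    obtain ⟨κ, hκ0, hκ⟩ := posdef_coord hR j
    refine ((hci t ht).const_mul κ).mono'
      ((humi t j).mul (humi t j)).aestronglyMeasurable
      (Filter.Eventually.of_forall fun ω => ?_)
    rw [Real.norm_eq_abs, abs_of_nonneg (mul_self_nonneg _)]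
    have h2 : 0 ≤ x t ω ⬝ᵥ Q *ᵥ x t ω := by simpa using hQ.posSemidef.dotProduct_mulVec_nonneg (x t ω)
    calc u t ω j * u t ω j ≤ κ * (u t ω ⬝ᵥ R *ᵥ u t ω) := hκ _
      _ ≤ κ * c t ω := by
          rw [hc t ω]
          exact mul_le_mul_of_nonneg_left (le_add_of_nonneg_left h2) hκ0.le
  have hwsq : ∀ t i, Integrable (fun ω => w (t + 1) ω i * w (t + 1) ω i) μ :=
    fun t i => hcovint t i i
  -- the drift process z
  obtain ⟨z, hzdef⟩ : ∃ z : ℕ → Ω → Fin p → ℝ,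
      z = fun t ω => A₀ *ᵥ x t ω + B₀ *ᵥ u t ω := ⟨_, rfl⟩
  have hzG : ∀ t, Measurable[hist w t] (z t) := by
    intro t
    simp only [hzdef]
    exact (mulVec_meas (hxmeasG t t le_rfl) A₀).add (mulVec_meas (humeasG t) B₀)
  have hzmi : ∀ t j, Measurable (fun ω => z t ω j) := fun t j =>
    (measurable_pi_apply j).comp ((hzG t).mono (hist_le hwmeas t) le_rfl)
  have hzcoord : ∀ t ω (j : Fin p), z t ω j
      = (∑ k, A₀ j k * x t ω k) + (∑ k, B₀ j k * u t ω k) := by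
    intro t ω j
    simp [hzdef, Matrix.mulVec, dotProduct]
  have hzsq : ∀ t, 1 ≤ t → ∀ j, Integrable (fun ω => z t ω j * z t ω j) μ := by
    intro t ht j
    have hA := sq_lin (μ := μ) Finset.univ (fun k => A₀ j k) (fun k ω => x t ω k)
      (fun k _ => hxmi t k) (fun k _ => hxsq t ht k)
    have hB := sq_lin (μ := μ) Finset.univ (fun k => B₀ j k) (fun k ω => u t ω k)
      (fun k _ => humi t k) (fun k _ => husq t ht k)
    simp only [hzcoord]
    have hexp : (fun ω => ((∑ k, A₀ j k * x t ω k) + (∑ k, B₀ j k * u t ω k))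
        * ((∑ k, A₀ j k * x t ω k) + (∑ k, B₀ j k * u t ω k)))
        = fun ω => (∑ k, A₀ j k * x t ω k) * (∑ k, A₀ j k * x t ω k)
          + (∑ k, A₀ j k * x t ω k) * (∑ k, B₀ j k * u t ω k)
          + (∑ k, B₀ j k * u t ω k) * (∑ k, A₀ j k * x t ω k)
          + (∑ k, B₀ j k * u t ω k) * (∑ k, B₀ j k * u t ω k) := by
      funext ω; ring
    rw [hexp]
    exact ((hA.2.add (int_mul hA.1 hB.1 hA.2 hB.2)).add
      (int_mul hB.1 hA.1 hB.2 hA.2)).add hB.2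
  -- the value function
  set V : ℕ → ℝ := fun t => ∫ ω, x t ω ⬝ᵥ K₀ *ᵥ x t ω ∂μ with hVdef
  have hV0 : ∀ t, 0 ≤ V t := fun t =>
    integral_nonneg fun ω => by simpa using hK₀.dotProduct_mulVec_nonneg (x t ω)
  have hVint : ∀ t, 1 ≤ t → Integrable (fun ω => x t ω ⬝ᵥ K₀ *ᵥ x t ω) μ :=
    fun t ht => bilin_int K₀ (hxmi t) (hxmi t) (hxsq t ht) (hxsq t ht)
  -- the average cost
  set a : ℕ → ℝ := fun t => ∫ ω, c t ω ∂μ with hadef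
  have ha0 : ∀ t, 0 ≤ a t := fun t => integral_nonneg (hc0 t)
  -- step inequality
  have hstep : ∀ t, 1 ≤ t → V t + τ ≤ a t + V (t + 1) := by
    intro t ht
    -- pointwise inequality
    have pw : ∀ ω, x t ω ⬝ᵥ K₀ *ᵥ x t ω
        + (2 * (w (t + 1) ω ⬝ᵥ K₀ *ᵥ z t ω) + w (t + 1) ω ⬝ᵥ K₀ *ᵥ w (t + 1) ω)
        ≤ c t ω + x (t + 1) ω ⬝ᵥ K₀ *ᵥ x (t + 1) ω := by
      intro ω
      have h1 := riccati_key Q R hR A₀ B₀ K₀ hK₀ hric (x t ω) (u t ω)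
      have hx1 : x (t + 1) ω = z t ω + w (t + 1) ω := by rw [hx t, hzdef]
      have hexp : x (t + 1) ω ⬝ᵥ K₀ *ᵥ x (t + 1) ω
          = z t ω ⬝ᵥ K₀ *ᵥ z t ω + 2 * (w (t + 1) ω ⬝ᵥ K₀ *ᵥ z t ω)
            + w (t + 1) ω ⬝ᵥ K₀ *ᵥ w (t + 1) ω := by
        rw [hx1, Matrix.mulVec_add, dotProduct_add, add_dotProduct,
          add_dotProduct, sym_dot hKt (z t ω) (w (t + 1) ω)]
        ring
      rw [hc t ω, hexp]
      have hz1 : z t ω = A₀ *ᵥ x t ω + B₀ *ᵥ u t ω := by rw [hzdef]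
      rw [hz1]
      linarith [h1]
    -- integrability of all pieces
    have hcrossint : Integrable (fun ω => w (t + 1) ω ⬝ᵥ K₀ *ᵥ z t ω) μ :=
      bilin_int K₀ (hwmi t) (hzmi t) (hwsq t) (hzsq t ht)
    have hwKw : Integrable (fun ω => w (t + 1) ω ⬝ᵥ K₀ *ᵥ w (t + 1) ω) μ :=
      bilin_int K₀ (hwmi t) (hwmi t) (hwsq t) (hwsq t)
    have hLint : Integrable (fun ω => x t ω ⬝ᵥ K₀ *ᵥ x t ω
        + (2 * (w (t + 1) ω ⬝ᵥ K₀ *ᵥ z t ω) + w (t + 1) ω ⬝ᵥ K₀ *ᵥ w (t + 1) ω)) μ :=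
      (hVint t ht).add ((hcrossint.const_mul 2).add hwKw)
    have hRint : Integrable (fun ω => c t ω + x (t + 1) ω ⬝ᵥ K₀ *ᵥ x (t + 1) ω) μ :=
      (hci t ht).add (hVint (t + 1) (by omega))
    have h2c : Integrable (fun ω => 2 * (w (t + 1) ω ⬝ᵥ K₀ *ᵥ z t ω)) μ :=
      hcrossint.const_mul 2
    have hsum2 : Integrable (fun ω => 2 * (w (t + 1) ω ⬝ᵥ K₀ *ᵥ z t ω)
        + w (t + 1) ω ⬝ᵥ K₀ *ᵥ w (t + 1) ω) μ := h2c.add hwKw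
    have hmono := integral_mono hLint hRint pw
    rw [integral_add (hVint t ht) hsum2,
      integral_add h2c hwKw,
      integral_add (hci t ht) (hVint (t + 1) (by omega))] at hmono
    -- the cross term vanishes
    have hcross0 : ∫ ω, w (t + 1) ω ⬝ᵥ K₀ *ᵥ z t ω ∂μ = 0 := by
      rw [bilin_integral K₀ (hwmi t) (hzmi t) (hwsq t) (hzsq t ht)]
      refine Finset.sum_eq_zero fun i _ => Finset.sum_eq_zero fun j _ => ?_
      have hzj : Measurable[hist w t] (fun ω => z t ω j) :=
        (measurable_pi_apply j).comp (hzG t)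
      have hwi : Measurable[MeasurableSpace.comap (w (t + 1)) MeasurableSpace.pi]
          (fun ω => w (t + 1) ω i) :=
        (measurable_pi_apply i).comp (Measurable.of_comap_le le_rfl)
      have hind : IndepFun (fun ω => z t ω j) (fun ω => w (t + 1) ω i) μ :=
        indep_of_hist hwmeas hindep t hzj hwi
      have hzint : Integrable (fun ω => z t ω j) μ := int_of_sq (hzmi t j) (hzsq t ht j)
      have hmul : ∫ ω, w (t + 1) ω i * z t ω j ∂μ = 0 := by
        have heq : (fun ω => w (t + 1) ω i * z t ω j)
            = fun ω => z t ω j * w (t + 1) ω i := by funext ω; ring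
        have h2 : ∫ ω, z t ω j * w (t + 1) ω i ∂μ
            = (∫ ω, z t ω j ∂μ) * ∫ ω, w (t + 1) ω i ∂μ := by
          simpa [Pi.mul_apply] using hind.integral_mul_eq_mul_integral hzint.aestronglyMeasurable
            (hint t i).aestronglyMeasurable
        rw [heq, h2, hmean t i, mul_zero]
      rw [hmul, mul_zero]
    -- the noise quadratic term equals τ
    have hwτ : ∫ ω, w (t + 1) ω ⬝ᵥ K₀ *ᵥ w (t + 1) ω ∂μ = τ := by
      rw [bilin_integral K₀ (hwmi t) (hwmi t) (hwsq t) (hwsq t), hτdef]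
      exact Finset.sum_congr rfl fun i _ => Finset.sum_congr rfl fun j _ => by
        rw [hcov t i j]
    rw [integral_const_mul] at hmono
    rw [hcross0, hwτ] at hmono
    simpa using hmono
  -- comparison of cost with value function
  obtain ⟨α, hα0, hαv⟩ := posdef_dominates hQ hK₀
  have hαV : ∀ t, 1 ≤ t → α * V t ≤ a t := by
    intro t ht
    have hmono := integral_mono ((hVint t ht).const_mul α) (hci t ht)
      (fun ω => by
        rw [hc t ω]
        have h2 : 0 ≤ u t ω ⬝ᵥ R *ᵥ u t ω := by simpa using hR.posSemidef.dotProduct_mulVec_nonneg (u t ω)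
        have := hαv (x t ω)
        linarith)
    rwa [integral_const_mul] at hmono
  -- the partial sums
  set Sa : ℕ → ℝ := fun T => ∑ t ∈ Finset.Icc 1 T, a t with hSadef
  have hSlt : ∀ T : ℕ, T₁ ≤ T → Sa T < (T : ℝ) * β := by
    intro T hT
    have h1T : 1 ≤ T := le_trans hT₁1 hT
    have hFT := hT₀ T (le_trans (le_max_left _ _) hT)
    have hsum : ∑ t ∈ Finset.Icc 1 T, ∫⁻ ω, ENNReal.ofReal (c t ω) ∂μ
        = ENNReal.ofReal (Sa T) := by
      rw [hSadef, ENNReal.ofReal_sum_of_nonneg (fun t _ => ha0 t)]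
      refine Finset.sum_congr rfl fun t ht' => ?_
      have ht1 : 1 ≤ t := (Finset.mem_Icc.mp ht').1
      rw [← ofReal_integral_eq_lintegral_ofReal (hci t ht1)
        (Filter.Eventually.of_forall (hc0 t))]
    rw [hsum] at hFT
    have hTne0 : (T : ENNReal) ≠ 0 := Nat.cast_ne_zero.mpr (by omega)
    have hTneT : (T : ENNReal) ≠ ⊤ := ENNReal.natCast_ne_top T
    have hmul : ENNReal.ofReal (Sa T) < (T : ENNReal) * b := by
      calc ENNReal.ofReal (Sa T)
          = (T : ENNReal) * ((T : ENNReal)⁻¹ * ENNReal.ofReal (Sa T)) := by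
            rw [← mul_assoc, ENNReal.mul_inv_cancel hTne0 hTneT, one_mul]
        _ < (T : ENNReal) * b := ENNReal.mul_lt_mul_right hTne0 hTneT hFT
    rw [hbβ, ← ENNReal.ofReal_natCast, ← ENNReal.ofReal_mul (Nat.cast_nonneg T)] at hmul
    have hSnn : 0 ≤ Sa T := Finset.sum_nonneg fun t _ => ha0 t
    exact (ENNReal.ofReal_lt_ofReal_iff_of_nonneg hSnn).mp hmul
  -- telescoping
  have htel : ∀ T : ℕ, 1 ≤ T → (T : ℝ) * τ + V 1 ≤ Sa T + V (T + 1) := by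
    refine Nat.le_induction ?_ ?_
    ·
      have h := hstep 1 le_rfl
      have hS1 : Sa 1 = a 1 := by simp [hSadef]
      rw [hS1]
      push_cast
      linarith
    · intro T hT ih
      have hS : Sa (T + 1) = Sa T + a (T + 1) := by
        rw [hSadef]
        exact Finset.sum_Icc_succ_top (by omega) a
      have h := hstep (T + 1) (by omega)
      rw [hS]
      push_cast
      push_cast at ih
      linarith
  -- growth of the cost
  have hgrow : ∀ T : ℕ, T₁ ≤ T → α * ((T : ℝ) * (τ - β)) ≤ a (T + 1) := by
    intro T hT
    have h1T : 1 ≤ T := le_trans hT₁1 hT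
    have h1 := htel T h1T
    have h2 := hSlt T hT
    have hVT : (T : ℝ) * (τ - β) ≤ V (T + 1) := by
      have := hV0 1
      nlinarith
    calc α * ((T : ℝ) * (τ - β)) ≤ α * V (T + 1) :=
          mul_le_mul_of_nonneg_left hVT hα0.le
      _ ≤ a (T + 1) := hαV (T + 1) (by omega)
  -- final contradiction
  set ε : ℝ := τ - β with hεdef
  have hε0 : 0 < ε := by simp [hεdef]; linarith
  obtain ⟨n, hn⟩ := exists_nat_gt (max ((2 * β) / (α * ε)) (T₁ : ℝ))
  set N : ℕ := n with hNdef
  have hNT₁ : T₁ ≤ N := by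
    have := le_trans (le_max_right _ _) hn.le
    exact_mod_cast this
  have hN1 : 1 ≤ N := le_trans hT₁1 hNT₁
  have hNβ : (2 * β) / (α * ε) < (N : ℝ) := lt_of_le_of_lt (le_max_left _ _) hn
  -- lower bound on Sa (2 * N)
  have hlow : (N : ℝ) * (α * ((N : ℝ) * ε)) ≤ Sa (2 * N) := by
    have hsub : Finset.Icc (N + 1) (2 * N) ⊆ Finset.Icc 1 (2 * N) := by
      intro t ht'
      rw [Finset.mem_Icc] at ht' ⊢
      omega
    have h1 : ∑ t ∈ Finset.Icc (N + 1) (2 * N), a t ≤ Sa (2 * N) :=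
      Finset.sum_le_sum_of_subset_of_nonneg hsub (fun t _ _ => ha0 t)
    have h2 : ∀ t ∈ Finset.Icc (N + 1) (2 * N), α * ((N : ℝ) * ε) ≤ a t := by
      intro t ht'
      rw [Finset.mem_Icc] at ht'
      obtain ⟨T, rfl⟩ : ∃ T, t = T + 1 := ⟨t - 1, by omega⟩
      have hTT₁ : T₁ ≤ T := by omega
      have hTN : (N : ℝ) ≤ (T : ℝ) := by exact_mod_cast (by omega : N ≤ T)
      calc α * ((N : ℝ) * ε) ≤ α * ((T : ℝ) * ε) := by
            apply mul_le_mul_of_nonneg_left _ hα0.le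
            exact mul_le_mul_of_nonneg_right hTN hε0.le
        _ ≤ a (T + 1) := hgrow T hTT₁
    have h3 : (Finset.Icc (N + 1) (2 * N)).card • (α * ((N : ℝ) * ε))
        ≤ ∑ t ∈ Finset.Icc (N + 1) (2 * N), a t :=
      Finset.card_nsmul_le_sum _ _ _ h2
    have hcard : (Finset.Icc (N + 1) (2 * N)).card = N := by
      rw [Nat.card_Icc]; omega
    rw [hcard, nsmul_eq_mul] at h3
    linarith
  have hup : Sa (2 * N) < (2 * N : ℕ) * β := hSlt (2 * N) (by omega)
  have hNpos : (0 : ℝ) < N := by exact_mod_cast hN1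
  have hcontr : α * ε * (N : ℝ) < 2 * β := by
    have h2N : ((2 * N : ℕ) : ℝ) = 2 * (N : ℝ) := by push_cast; ring
    rw [h2N] at hup
    nlinarith
  have hfinal : 2 * β < α * ε * (N : ℝ) := by
    have hαε : 0 < α * ε := mul_pos hα0 hε0
    calc 2 * β = (α * ε) * ((2 * β) / (α * ε)) := by field_simp
      _ < (α * ε) * (N : ℝ) := by
          exact mul_lt_mul_of_pos_left hNβ hαε
  linarith
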